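/- Let L be a lattice with a negative definite symmetric bilinear form (·,·), with fixed basis {E_j}_{j∈J}. Define NE_Q := {x ∈ L⊗Q : (x, E_j) ≥ 0 for all j}. Fix l' ∈ L⊗Q. If l₁, l₂ are effective elements of L (nonnegative coordinates in the basis) with l' − l₁ ∈ NE_Q and l' − l₂ ∈ NE_Q, then for l := min{l₁, l₂} (coordinatewise minimum) one also has l' − l ∈ NE_Q. -/
import Mathlib


open Matrix

variable {J : Type*}

/-- The rational bilinear (intersection) form associated with the integral matrix `B`. -/
def bform [Fintype J] (B : Matrix J J ℤ) (x y : J → ℚ) : ℚ :=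
  x ⬝ᵥ (B.map (fun n => (n : ℚ))).mulVec y

/-- `B` is negative definite as a rational quadratic form. -/
def NegDef [Fintype J] (B : Matrix J J ℤ) : Prop :=
  ∀ x : J → ℚ, x ≠ 0 → bform B x x < 0

/-- Membership in the lattice `L` (integral coordinates in the basis `E_j`). -/
def isLat (x : J → ℚ) : Prop := ∀ j, ∃ m : ℤ, x j = (m : ℚ)

/-- Membership in the dual lattice `L' ⊂ L ⊗ ℚ`. -/
def isDual [Fintype J] [DecidableEq J] (B : Matrix J J ℤ) (x : J → ℚ) : Prop :=
  ∀ j, ∃ m : ℤ, bform B x (Pi.single j 1) = (m : ℚ)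

/-- Membership in the anti-nef cone `NE_ℚ = {x : (x,E_j) ≥ 0 ∀ j}`. -/
def inNE [Fintype J] [DecidableEq J] (B : Matrix J J ℤ) (x : J → ℚ) : Prop :=
  ∀ j, 0 ≤ bform B x (Pi.single j 1)

/-- Effective rational cycles: all coordinates nonnegative. -/
def Effective (x : J → ℚ) : Prop := ∀ j, 0 ≤ x j

/-- `χ(x) = -(x, x+K)/2` (Riemann–Roch). -/
def chi [Fintype J] (B : Matrix J J ℤ) (K x : J → ℚ) : ℚ := -(bform B x (x + K)) / 2


lemma bform_single' [Fintype J] [DecidableEq J] (B : Matrix J J ℤ) (x : J → ℚ) (j : J) :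
    bform B x (Pi.single j 1) = ∑ i, x i * (B i j : ℚ) := by
  simp [bform, Matrix.mulVec_single, dotProduct, Matrix.map_apply]

/-- if `l' - l₁` and `l' - l₂` are anti-nef with `l₁, l₂` effective
integral cycles, then `l' - min{l₁,l₂}` is anti-nef. -/
theorem stmt1 {J : Type*} [Fintype J] [DecidableEq J]
    (B : Matrix J J ℤ)
    (hsym : B.IsSymm)
    (hneg : NegDef B)
    (hoff : ∀ i j, i ≠ j → 0 ≤ B i j)
    (l' l₁ l₂ : J → ℚ)
    (h1lat : isLat l₁) (h1eff : Effective l₁) (h1ne : inNE B (l' - l₁))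
    (h2lat : isLat l₂) (h2eff : Effective l₂) (h2ne : inNE B (l' - l₂)) :
    inNE B (l' - fun j => min (l₁ j) (l₂ j)) := by
  intro j
  rcases le_total (l₁ j) (l₂ j) with h | h
  · have hmin : min (l₁ j) (l₂ j) = l₁ j := min_eq_left h
    rw [bform_single']
    have key : ∑ i, ((l' - fun k => min (l₁ k) (l₂ k)) i) * (B i j : ℚ)
        = ∑ i, ((l' - l₁) i) * (B i j : ℚ)
          + ∑ i, (l₁ i - min (l₁ i) (l₂ i)) * (B i j : ℚ) := by
      rw [← Finset.sum_add_distrib]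
      apply Finset.sum_congr rfl
      intro i _
      simp only [Pi.sub_apply]
      ring
    rw [key]
    have h1 : 0 ≤ ∑ i, ((l' - l₁) i) * (B i j : ℚ) := by
      have := h1ne j; rwa [bform_single'] at this
    have h2 : 0 ≤ ∑ i, (l₁ i - min (l₁ i) (l₂ i)) * (B i j : ℚ) := by
      apply Finset.sum_nonneg
      intro i _
      rcases eq_or_ne i j with rfl | hij
      · rw [hmin]; simp
      · have := hoff i j hij
        have : (0:ℚ) ≤ (B i j : ℚ) := by exact_mod_cast this
        have hge : 0 ≤ l₁ i - min (l₁ i) (l₂ i) := by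
          simp [min_le_left]
        positivity
    linarith
  · have hmin : min (l₁ j) (l₂ j) = l₂ j := min_eq_right h
    rw [bform_single']
    have key : ∑ i, ((l' - fun k => min (l₁ k) (l₂ k)) i) * (B i j : ℚ)
        = ∑ i, ((l' - l₂) i) * (B i j : ℚ)
          + ∑ i, (l₂ i - min (l₁ i) (l₂ i)) * (B i j : ℚ) := by
      rw [← Finset.sum_add_distrib]
      apply Finset.sum_congr rfl
      intro i _
      simp only [Pi.sub_apply]
      ring
    rw [key]
    have h1 : 0 ≤ ∑ i, ((l' - l₂) i) * (B i j : ℚ) := by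
      have := h2ne j; rwa [bform_single'] at this
    have h2 : 0 ≤ ∑ i, (l₂ i - min (l₁ i) (l₂ i)) * (B i j : ℚ) := by
      apply Finset.sum_nonneg
      intro i _
      rcases eq_or_ne i j with rfl | hij
      · rw [hmin]; simp
      · have := hoff i j hij
        have : (0:ℚ) ≤ (B i j : ℚ) := by exact_mod_cast this
        have hge : 0 ≤ l₂ i - min (l₁ i) (l₂ i) := by
          simp [min_le_right]
        positivity
    linarith
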